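/- For any multipartition λ of n and multicharge s = (s_0 ≤ ... ≤ s_{l-1}), the regularization λ^R dominates λ: λ^R ⊵ λ in the dominance order on l-multipartitions of n. -/

import Mathlib

open scoped Classical

namespace AK

/-- A partition, given by its parts indexed from 1 (index 0 unused and set to 0),
finitely supported and weakly decreasing on positive indices. -/
def IsPartitionF (p : ℕ →₀ ℕ) : Prop :=
  p 0 = 0 ∧ ∀ i j : ℕ, 1 ≤ i → i ≤ j → p j ≤ p i

/-- An `l`-multipartition: rows `0,…,l-1` are partitions, rows `≥ l` are zero. -/
def IsMultipartition (l : ℕ) (lam : ℕ → ℕ →₀ ℕ) : Prop :=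
  (∀ c, IsPartitionF (lam c)) ∧ ∀ c, l ≤ c → lam c = 0

/-- A multicharge: `s` is weakly increasing on `{0,…,l-1}`. -/
def IsMulticharge (l : ℕ) (s : ℕ → ℤ) : Prop :=
  ∀ c c' : ℕ, c ≤ c' → c' < l → s c ≤ s c'

/-- The rank of an `l`-multipartition. -/
def rank (l : ℕ) (lam : ℕ → ℕ →₀ ℕ) : ℕ :=
  ∑ c ∈ Finset.range l, (lam c).sum fun _ v => v

/-- The entry of the shifted `s`-symbol of size `h` in row `c` at position `i`
(counted from the right): `λ^c_i - i + s_c + h`. -/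
def symbEntry (s : ℕ → ℤ) (h : ℕ) (lam : ℕ → ℕ →₀ ℕ) (c i : ℕ) : ℤ :=
  ((lam c) i : ℤ) - (i : ℤ) + s c + (h : ℤ)

/-- `λ` is cylindric for the multicharge `s`: `λ^c_i ≥ λ^{c+1}_{i+s_{c+1}-s_c}`. -/
def Cylindric (l : ℕ) (s : ℕ → ℤ) (lam : ℕ → ℕ →₀ ℕ) : Prop :=
  ∀ c : ℕ, c + 1 < l → ∀ i : ℕ, 1 ≤ i →
    (lam (c+1)) (i + (s (c+1) - s c).toNat) ≤ (lam c) i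

/-- The shifted symbol is standard: columns weakly decrease from top to bottom, i.e.
`B^c_i ≥ B^{c+1}_{i+s_{c+1}-s_c}`. -/
def Standard (l : ℕ) (s : ℕ → ℤ) (h : ℕ) (lam : ℕ → ℕ →₀ ℕ) : Prop :=
  ∀ c : ℕ, c + 1 < l → ∀ i : ℕ, 1 ≤ i →
    symbEntry s h lam (c+1) (i + (s (c+1) - s c).toNat) ≤ symbEntry s h lam c i

/-- The multiset of entries of the column of the symbol with column coordinate `j`
(row `c` meets this column at position `j + s_c`, when `j + s_c ≥ 1`). -/
def columnMultiset (l : ℕ) (s : ℕ → ℤ) (h : ℕ) (lam : ℕ → ℕ →₀ ℕ) (j : ℤ) : Multiset ℤ :=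
  (((Finset.range l).filter (fun c => 1 ≤ j + s c)).val).map
    (fun c => symbEntry s h lam c (j + s c).toNat)

/-- `μ` is the regularization `λ^R` of `λ`: a multipartition whose symbol is standard and
whose columns carry the same multisets of entries as those of the symbol of `λ`. -/
def IsRegularization (l : ℕ) (s : ℕ → ℤ) (lam mu : ℕ → ℕ →₀ ℕ) : Prop :=
  IsMultipartition l mu ∧ (∀ h : ℕ, Standard l s h mu) ∧
  ∀ (h : ℕ) (j : ℤ), columnMultiset l s h mu j = columnMultiset l s h lam j

/-- The dominance order: `lam ⊵ mu`. -/
def Dominates (l : ℕ) (lam mu : ℕ → ℕ →₀ ℕ) : Prop :=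
  ∀ c : ℕ, c < l → ∀ k : ℕ,
    ((∑ i ∈ Finset.range c, (mu i).sum fun _ v => v) + ∑ j ∈ Finset.range k, (mu c) (j+1))
      ≤ ((∑ i ∈ Finset.range c, (lam i).sum fun _ v => v) + ∑ j ∈ Finset.range k, (lam c) (j+1))

/-- The value `x` occurs in row `c` of the shifted symbol of size `h`. -/
def InRow (s : ℕ → ℤ) (h : ℕ) (lam : ℕ → ℕ →₀ ℕ) (c : ℕ) (x : ℤ) : Prop :=
  ∃ p : ℕ, 1 ≤ p ∧ (p : ℤ) ≤ (h : ℤ) + s c ∧ symbEntry s h lam c p = x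

/-- `R(λ)_{(j,c)}`: the number of rows `c' > c` with `B^c_j < B^{c'}_{j+s_{c'}-s_c}` and
`B^c_j` not occurring in row `c'`. -/
noncomputable def RstatAt (l : ℕ) (s : ℕ → ℤ) (h : ℕ) (lam : ℕ → ℕ →₀ ℕ) (c j : ℕ) : ℕ :=
  ((Finset.range l).filter (fun c' => c < c' ∧
      symbEntry s h lam c j < symbEntry s h lam c' (j + (s c' - s c).toNat) ∧
      ¬ InRow s h lam c' (symbEntry s h lam c j))).card

/-- The regularization statistic `R(λ)`. -/
noncomputable def Rstat (l : ℕ) (s : ℕ → ℤ) (h : ℕ) (lam : ℕ → ℕ →₀ ℕ) : ℕ :=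
  ∑ c ∈ Finset.range l, ∑ j ∈ Finset.Icc 1 (((h : ℤ) + s c).toNat), RstatAt l s h lam c j

/-- `h` is an admissible size for the symbol of `λ`: every row is nonempty and long enough
to contain all nonzero parts. -/
def Admissible (l : ℕ) (s : ℕ → ℤ) (h : ℕ) (lam : ℕ → ℕ →₀ ℕ) : Prop :=
  ∀ c : ℕ, c < l → 1 ≤ (h : ℤ) + s c ∧ (lam c) (((h : ℤ) + s c).toNat) = 0

/-- `mu = lam⁻` is obtained from the nonempty cylindric `lam` by the reduction step:
`c0` is the least index of a nonempty component, `i0` the minimal position of a gap,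
and the `r0` equal column entries `j(λ)` are decreased by `1`. -/
def IsReduction (l : ℕ) (s : ℕ → ℤ) (lam mu : ℕ → ℕ →₀ ℕ) : Prop :=
  ∃ c0 i0 r0 : ℕ, c0 < l ∧ (lam c0) 1 ≠ 0 ∧ (∀ c, c < c0 → (lam c) 1 = 0) ∧
    1 ≤ i0 ∧ (lam c0) (i0+1) < (lam c0) i0 ∧
    (∀ i, 1 ≤ i → i < i0 → (lam c0) (i+1) = (lam c0) i) ∧
    1 ≤ r0 ∧ c0 + r0 ≤ l ∧
    (∀ k, k < r0 → (lam (c0+k)) (i0 + (s (c0+k) - s c0).toNat) = (lam c0) i0) ∧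
    (c0 + r0 = l ∨ (lam (c0+r0)) (i0 + (s (c0+r0) - s c0).toNat) ≠ (lam c0) i0) ∧
    (∀ c i, (mu c) i =
      if c0 ≤ c ∧ c < c0 + r0 ∧ i = i0 + (s c - s c0).toNat then (lam c) i - 1 else (lam c) i)

/-- Row `c` of the symbol of `xi` is obtained from that of `nu` by replacing the
entry `j+h-1` with `j+h`. -/
def ArrowRow (s : ℕ → ℤ) (h : ℕ) (j : ℤ) (nu xi : ℕ → ℕ →₀ ℕ) (c : ℕ) : Prop :=
  ∃ p : ℕ, 1 ≤ p ∧ (p : ℤ) ≤ (h : ℤ) + s c ∧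
    symbEntry s h nu c p = j + h - 1 ∧ symbEntry s h xi c p = j + h ∧
    ∀ i, 1 ≤ i → i ≠ p → symbEntry s h xi c i = symbEntry s h nu c i

/-- `nu →^{j:k} xi` along the set `rows` of `k` distinct rows. -/
def Arrow (l : ℕ) (s : ℕ → ℤ) (h : ℕ) (j : ℤ) (rows : Finset ℕ)
    (nu xi : ℕ → ℕ →₀ ℕ) : Prop :=
  (∀ c ∈ rows, c < l) ∧ (∀ c ∈ rows, ArrowRow s h j nu xi c) ∧
  ∀ c, c ∉ rows → ∀ i, 1 ≤ i → symbEntry s h xi c i = symbEntry s h nu c i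

/-- Number of entries of row `c` of the symbol equal to `x`. -/
noncomputable def countVal (s : ℕ → ℤ) (h : ℕ) (lam : ℕ → ℕ →₀ ℕ) (c : ℕ) (x : ℤ) : ℕ :=
  ((Finset.Icc 1 (((h : ℤ) + s c).toNat)).filter (fun i => symbEntry s h lam c i = x)).card

/-- The exponent `N_j(ν,ξ)` in the Fock space action of `f_j^{(k)}`. -/
noncomputable def Nstat (s : ℕ → ℤ) (h : ℕ) (j : ℤ) (rows : Finset ℕ)
    (nu xi : ℕ → ℕ →₀ ℕ) : ℤ :=
  ∑ t ∈ rows,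
    ((∑ c ∈ Finset.range (t+1), (countVal s h xi c (j + h - 1) : ℤ))
      - ∑ c ∈ Finset.range (t+1), (countVal s h nu c (j + h) : ℤ))

/-- the regularization `λ^R` dominates `λ`. -/
private lemma sum_Icc_one_eq {M : Type*} [AddCommMonoid M] (f : ℕ → M) (n : ℕ) :
    ∑ i ∈ Finset.Icc 1 n, f i = ∑ j ∈ Finset.range n, f (j + 1) := by
  refine Finset.sum_nbij' (fun i => i - 1) (fun j => j + 1) ?_ ?_ ?_ ?_ ?_
  · intro a ha; simp only [Finset.mem_Icc] at ha; simp only [Finset.mem_range]; omega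
  · intro a ha; simp only [Finset.mem_range] at ha; simp only [Finset.mem_Icc]; omega
  · intro a ha; simp only [Finset.mem_Icc] at ha; omega
  · intro a _; omega
  · intro a ha; simp only [Finset.mem_Icc] at ha; congr 1; omega

theorem regularization_dominates (l : ℕ) (s : ℕ → ℤ) (hs : IsMulticharge l s)
    (lam mu : ℕ → ℕ →₀ ℕ) (hlam : IsMultipartition l lam)
    (hreg : IsRegularization l s lam mu) :
    Dominates l mu lam := by
  classical
  obtain ⟨⟨hmupart, hmuzero⟩, hstd, hcol⟩ := hreg
  obtain ⟨hlampart, hlamzero⟩ := hlam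
  intro c hc k
  have hl : 0 < l := lt_of_le_of_lt (Nat.zero_le c) hc
  have hne : (Finset.range l).Nonempty := ⟨0, Finset.mem_range.mpr hl⟩
  set M : ℕ := (Finset.range l).sup
      (fun c' => max ((lam c').support.sup id) ((mu c').support.sup id)) with hMdef
  set h : ℕ := k + M + 1 + (Finset.range l).sup (fun c' => (- s c').toNat) with hhdef
  have hbig : ∀ c' : ℕ, c' < l → (k : ℤ) + (M : ℤ) + 1 ≤ (h : ℤ) + s c' := by
    intro c' hc'
    have h1 : ((- s c').toNat : ℤ)
        ≤ (((Finset.range l).sup (fun c' => (- s c').toNat) : ℕ) : ℤ) := by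
      exact_mod_cast Finset.le_sup (f := fun c' => (- s c').toNat) (Finset.mem_range.mpr hc')
    have h2 : - s c' ≤ ((- s c').toNat : ℤ) := Int.self_le_toNat _
    have h3 : (h : ℤ) = (k : ℤ) + (M : ℤ) + 1
        + (((Finset.range l).sup (fun c' => (- s c').toNat) : ℕ) : ℤ) := by
      rw [hhdef]; push_cast; ring
    omega
  have hMbound : ∀ (ν : ℕ → ℕ →₀ ℕ), (ν = lam ∨ ν = mu) → ∀ c' , c' < l → ∀ i, M < i →
      ν c' i = 0 := by
    intro ν hν c' hc' i hi
    by_contra hzero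
    have hmem : i ∈ (ν c').support := Finsupp.mem_support_iff.mpr hzero
    have hsup : max ((lam c').support.sup id) ((mu c').support.sup id) ≤ M :=
      Finset.le_sup (f := fun c' => max ((lam c').support.sup id) ((mu c').support.sup id))
        (Finset.mem_range.mpr hc')
    have h1 : (ν c').support.sup id ≤ M := by
      rcases hν with rfl | rfl
      · exact le_trans (le_max_left _ _) hsup
      · exact le_trans (le_max_right _ _) hsup
    have h2 : i ≤ M := le_trans (Finset.le_sup (f := id) hmem) h1
    omega
  set m : ℕ → ℕ := fun c' => ((h : ℤ) + s c').toNat with hmdef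
  have hmz : ∀ c', c' < l → ((m c' : ℕ) : ℤ) = (h : ℤ) + s c' := by
    intro c' hc'
    have := hbig c' hc'
    simp only [hmdef]
    omega
  -- partial Finsupp sums as interval sums
  have hsum_eq : ∀ (ν : ℕ → ℕ →₀ ℕ), (ν = lam ∨ ν = mu) → ∀ c', c' < l →
      ((ν c').sum fun _ v => v) = ∑ i ∈ Finset.Icc 1 (m c'), (ν c') i := by
    intro ν hν c' hc'
    have hz : (ν c') 0 = 0 := by
      rcases hν with rfl | rfl
      · exact (hlampart c').1
      · exact (hmupart c').1
    rw [Finsupp.sum]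
    apply Finset.sum_subset
    · intro x hx
      have hx0 : (ν c') x ≠ 0 := Finsupp.mem_support_iff.mp hx
      have hx1 : 1 ≤ x := by
        rcases Nat.eq_zero_or_pos x with rfl | hpos
        · exact absurd hz hx0
        · exact hpos
      have hxM : x ≤ M := by
        by_contra hh
        exact hx0 (hMbound ν hν c' hc' x (by omega))
      have hmc := hmz c' hc'
      have hb := hbig c' hc'
      simp only [Finset.mem_Icc]
      omega
    · intro x _ hx
      exact Finsupp.notMem_support_iff.mp hx
  set len : ℕ → ℕ := fun c' => if c' = c then k else m c' with hlendef
  have hlenm : ∀ x, x < c + 1 → (len x : ℤ) ≤ (h : ℤ) + s x := by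
    intro x hx
    have hxl : x < l := by omega
    have hb := hbig x hxl
    have hmx := hmz x hxl
    simp only [hlendef]
    split <;> omega
  -- the region identity
  have hinner : ∀ (ν : ℕ → ℕ →₀ ℕ) (c' : ℕ), c' ∈ Finset.range (c + 1) →
      ∑ i ∈ Finset.Icc 1 (len c'), symbEntry s h ν c' i
        = ∑ j ∈ Finset.Icc (1 - s c') ((len c' : ℤ) - s c'),
            symbEntry s h ν c' ((j + s c').toNat) := by
    intro ν c' _
    refine Finset.sum_nbij' (fun i => (i : ℤ) - s c') (fun j => (j + s c').toNat) ?_ ?_ ?_ ?_ ?_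
    · intro a ha; simp only [Finset.mem_Icc] at ha ⊢; omega
    · intro a ha; simp only [Finset.mem_Icc] at ha ⊢; omega
    · intro a ha; simp only [Finset.mem_Icc] at ha; omega
    · intro a ha; simp only [Finset.mem_Icc] at ha; omega
    · intro a ha; simp only [Finset.mem_Icc] at ha; congr 1; omega
  set Smax : ℤ := (Finset.range l).sup' hne s with hSmaxdef
  have hregion : ∀ ν : ℕ → ℕ →₀ ℕ,
      ∑ c' ∈ Finset.range (c + 1), ∑ i ∈ Finset.Icc 1 (len c'), symbEntry s h ν c' i
        = ∑ j ∈ Finset.Icc (1 - Smax) (h : ℤ),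
            ∑ c' ∈ (Finset.range (c + 1)).filter
                (fun c' => 1 ≤ j + s c' ∧ j + s c' ≤ (len c' : ℤ)),
              symbEntry s h ν c' ((j + s c').toNat) := by
    intro ν
    rw [Finset.sum_congr rfl (hinner ν)]
    refine Finset.sum_comm' ?_
    intro x y
    simp only [Finset.mem_Icc, Finset.mem_range, Finset.mem_filter]
    constructor
    · rintro ⟨hx, hy1, hy2⟩
      have h1 := hlenm x hx
      have hsx : s x ≤ Smax := by
        rw [hSmaxdef]
        exact Finset.le_sup' s (Finset.mem_range.mpr (by omega : x < l))
      exact ⟨⟨hx, by omega, by omega⟩, by omega, by omega⟩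
    · rintro ⟨⟨hx, h1, h2⟩, _, _⟩
      exact ⟨hx, by omega, by omega⟩
  -- per-column inequality
  have hcolkey : ∀ j : ℤ,
      ∑ c' ∈ (Finset.range (c + 1)).filter
          (fun c' => 1 ≤ j + s c' ∧ j + s c' ≤ (len c' : ℤ)),
        symbEntry s h lam c' ((j + s c').toNat)
      ≤ ∑ c' ∈ (Finset.range (c + 1)).filter
          (fun c' => 1 ≤ j + s c' ∧ j + s c' ≤ (len c' : ℤ)),
        symbEntry s h mu c' ((j + s c').toNat) := by
    intro j
    set Sel : Finset ℕ := (Finset.range (c + 1)).filter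
        (fun c' => 1 ≤ j + s c' ∧ j + s c' ≤ (len c' : ℤ)) with hSeldef
    set F : Finset ℕ := (Finset.range l).filter (fun c' => 1 ≤ j + s c') with hFdef
    have hSelmem : ∀ x, x ∈ Sel ↔ (x < c + 1 ∧ 1 ≤ j + s x ∧ j + s x ≤ (len x : ℤ)) := by
      intro x; simp [hSeldef]
    have hFmem : ∀ x, x ∈ F ↔ (x < l ∧ 1 ≤ j + s x) := by
      intro x; simp [hFdef]
    have hSelF : Sel ⊆ F := by
      intro x hx
      rw [hSelmem] at hx
      rw [hFmem]
      exact ⟨by omega, hx.2.1⟩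
    have hmono : ∀ c1, c1 ∈ F → ∀ c2, c1 ≤ c2 → c2 ∈ F →
        symbEntry s h mu c2 ((j + s c2).toNat) ≤ symbEntry s h mu c1 ((j + s c1).toNat) := by
      intro c1 hc1 c2 hle
      rw [hFmem] at hc1
      induction c2, hle using Nat.le_induction with
      | base => intro _; exact le_refl _
      | succ n hn ih =>
        intro hc2
        rw [hFmem] at hc2
        have hnl : n < l := by omega
        have hsn : s c1 ≤ s n := hs c1 n hn hnl
        have hFn : 1 ≤ j + s n := by omega
        have hmn : s n ≤ s (n + 1) := hs n (n + 1) (by omega) (by omega)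
        have step := hstd h n (by omega : n + 1 < l) ((j + s n).toNat) (by omega)
        have hrw : (j + s n).toNat + (s (n + 1) - s n).toNat = (j + s (n + 1)).toNat := by
          omega
        rw [hrw] at step
        exact le_trans step (ih (by rw [hFmem]; exact ⟨hnl, hFn⟩))
    have hcolsum : ∀ (ν : ℕ → ℕ →₀ ℕ) (g : ℤ → ℤ),
        ∑ x ∈ F, g (symbEntry s h ν x ((j + s x).toNat))
          = ((columnMultiset l s h ν j).map g).sum := by
      intro ν g
      rw [columnMultiset, Multiset.map_map]
      rfl
    rcases Finset.eq_empty_or_nonempty Sel with hSe | hSe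
    · rw [hSe]; simp
    have hcm : Sel.max' hSe ∈ Sel := Finset.max'_mem _ _
    set cmax : ℕ := Sel.max' hSe with hcmaxdef
    set t : ℤ := symbEntry s h mu cmax ((j + s cmax).toNat) with htdef
    have hdown : ∀ x, x ∈ F → x ≤ cmax → x ∈ Sel := by
      intro x hxF hxle
      rw [hFmem] at hxF
      rw [hSelmem] at hcm ⊢
      refine ⟨by omega, hxF.2, ?_⟩
      by_cases hxc : x = c
      · have hcmc : cmax = c := by omega
        rw [hxc, ← hcmc]
        exact hcm.2.2
      · have hxlc : x < c := by omega
        have h1 := hlenm cmax (by omega)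
        have h2 : (len x : ℤ) = (h : ℤ) + s x := by
          simp only [hlendef]
          rw [if_neg hxc]
          exact hmz x hxF.1
        have h3 := hcm.2.2
        omega
    have h1 : ∀ x, x ∈ Sel → t ≤ symbEntry s h mu x ((j + s x).toNat) :=
      fun x hx => hmono x (hSelF hx) cmax (Finset.le_max' _ _ hx) (hSelF hcm)
    have h2 : ∀ x, x ∈ F → x ∉ Sel → symbEntry s h mu x ((j + s x).toNat) ≤ t := by
      intro x hxF hxS
      have hcx : cmax ≤ x := by
        by_contra hh
        exact hxS (hdown x hxF (by omega))
      exact hmono cmax (hSelF hcm) x hcx hxF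
    have hmid : ∑ x ∈ F, max (symbEntry s h lam x ((j + s x).toNat) - t) 0
        = ∑ x ∈ F, max (symbEntry s h mu x ((j + s x).toNat) - t) 0 := by
      rw [hcolsum lam (fun x => max (x - t) 0), hcolsum mu (fun x => max (x - t) 0),
        hcol h j]
    calc ∑ x ∈ Sel, symbEntry s h lam x ((j + s x).toNat)
        ≤ ∑ x ∈ Sel, (max (symbEntry s h lam x ((j + s x).toNat) - t) 0 + t) := by
          refine Finset.sum_le_sum fun x _ => ?_
          have := le_max_left (symbEntry s h lam x ((j + s x).toNat) - t) 0
          omega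
      _ = (∑ x ∈ Sel, max (symbEntry s h lam x ((j + s x).toNat) - t) 0) + Sel.card • t := by
          rw [Finset.sum_add_distrib, Finset.sum_const]
      _ ≤ (∑ x ∈ F, max (symbEntry s h lam x ((j + s x).toNat) - t) 0) + Sel.card • t := by
          refine add_le_add_left ?_ _
          exact Finset.sum_le_sum_of_subset_of_nonneg hSelF fun x _ _ => le_max_right _ _
      _ = (∑ x ∈ F, max (symbEntry s h mu x ((j + s x).toNat) - t) 0) + Sel.card • t := by
          rw [hmid]
      _ = (∑ x ∈ Sel, max (symbEntry s h mu x ((j + s x).toNat) - t) 0) + Sel.card • t := by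
          refine congrArg (· + Sel.card • t) ?_
          refine (Finset.sum_subset hSelF fun x hxF hxS => ?_).symm
          have := h2 x hxF hxS
          omega
      _ = ∑ x ∈ Sel, (max (symbEntry s h mu x ((j + s x).toNat) - t) 0 + t) := by
          rw [Finset.sum_add_distrib, Finset.sum_const]
      _ = ∑ x ∈ Sel, symbEntry s h mu x ((j + s x).toNat) := by
          refine Finset.sum_congr rfl fun x hx => ?_
          have := h1 x hx
          omega
  have key : ∑ c' ∈ Finset.range (c + 1), ∑ i ∈ Finset.Icc 1 (len c'), symbEntry s h lam c' i
      ≤ ∑ c' ∈ Finset.range (c + 1), ∑ i ∈ Finset.Icc 1 (len c'), symbEntry s h mu c' i := by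
    rw [hregion lam, hregion mu]
    exact Finset.sum_le_sum fun j _ => hcolkey j
  -- translate the goal
  have hP : ∀ ν : ℕ → ℕ →₀ ℕ, (ν = lam ∨ ν = mu) →
      (((∑ i ∈ Finset.range c, (ν i).sum fun _ v => v)
          + ∑ j ∈ Finset.range k, (ν c) (j + 1) : ℕ) : ℤ)
        = (∑ c' ∈ Finset.range (c + 1), ∑ i ∈ Finset.Icc 1 (len c'), symbEntry s h ν c' i)
          + ∑ c' ∈ Finset.range (c + 1), ∑ i ∈ Finset.Icc 1 (len c'),
              ((i : ℤ) - s c' - (h : ℤ)) := by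
    intro ν hν
    have hA : (∑ i ∈ Finset.range c, (ν i).sum fun _ v => v)
        = ∑ c' ∈ Finset.range c, ∑ i ∈ Finset.Icc 1 (len c'), ν c' i := by
      refine Finset.sum_congr rfl fun c' hc' => ?_
      have hc'c := Finset.mem_range.mp hc'
      rw [hsum_eq ν hν c' (by omega)]
      have : len c' = m c' := by simp only [hlendef]; exact if_neg (by omega)
      rw [this]
    have hB : (∑ j ∈ Finset.range k, (ν c) (j + 1)) = ∑ i ∈ Finset.Icc 1 (len c), ν c i := by
      have hlc : len c = k := by simp [hlendef]
      rw [hlc, sum_Icc_one_eq]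
    have hN : ((∑ i ∈ Finset.range c, (ν i).sum fun _ v => v)
          + ∑ j ∈ Finset.range k, (ν c) (j + 1) : ℕ)
        = ∑ c' ∈ Finset.range (c + 1), ∑ i ∈ Finset.Icc 1 (len c'), ν c' i := by
      rw [hA, hB, Finset.sum_range_succ]
    rw [hN]
    push_cast
    rw [← Finset.sum_add_distrib]
    refine Finset.sum_congr rfl fun c' _ => ?_
    rw [← Finset.sum_add_distrib]
    refine Finset.sum_congr rfl fun i _ => ?_
    simp only [symbEntry]
    ring
  have hfin : (((∑ i ∈ Finset.range c, (lam i).sum fun _ v => v)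
        + ∑ j ∈ Finset.range k, (lam c) (j + 1) : ℕ) : ℤ)
      ≤ (((∑ i ∈ Finset.range c, (mu i).sum fun _ v => v)
        + ∑ j ∈ Finset.range k, (mu c) (j + 1) : ℕ) : ℤ) := by
    rw [hP lam (Or.inl rfl), hP mu (Or.inr rfl)]
    exact add_le_add_left key _
  exact_mod_cast hfin

end AK
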